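/- Let S be a white noise stochastic flow on a Polish space X with Markov semigroup P_{st}f(x) := 𝔼[f(S(t,s;·)x)], and let {ρ_s}_{s∈ℝ} be an evolution system of measures for {P_{st}}. Fix t ∈ ℝ and a bounded measurable function f : X → ℝ. Then the process M_s(ω) := ∫_X f(S(t,t−s;ω)x) ρ_{t−s}(dx), s ≥ 0, is a bounded martingale with respect to the filtration 𝓖_s := 𝓕_{≥ t−s}. -/

import Mathlib

open MeasureTheory Filter Topology

/-- A stochastic flow on a metric space `X` over a probability space `(Ω, 𝓕, ℙ)`:
a family of maps `S t s ω : X → X` (for `s ≤ t`) satisfying, for `ℙ`-a.e. `ω`,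
the cocycle property, continuity in `x`, the identity at equal times, and a joint
measurability condition in `(s, ω)` on `(-∞, t] × Ω`. -/
def IsStochasticFlow {Ω X : Type*} [MeasurableSpace Ω] [MetricSpace X]
    [MeasurableSpace X] [BorelSpace X]
    (ℙ : Measure Ω) (S : ℝ → ℝ → Ω → X → X) : Prop :=
  (∀ᵐ ω ∂ℙ,
    (∀ s r t : ℝ, s ≤ r → r ≤ t → ∀ x : X, S t r ω (S r s ω x) = S t s ω x) ∧
    (∀ s t : ℝ, s ≤ t → Continuous fun x : X => S t s ω x) ∧
    (∀ t : ℝ, ∀ x : X, S t t ω x = x)) ∧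
  (∀ t : ℝ, ∀ x : X, Measurable fun p : {s : ℝ // s ≤ t} × Ω => S t p.1.1 p.2 x)

/-- `K` is an attracting set at time `t` for the sample point `ω`: every nonempty
bounded set `B` satisfies `d(S(t,s;ω)B, K) → 0` as `s → -∞`, where
`d(A,B) = sup_{x ∈ A} inf_{y ∈ B} d(x,y)` (formulated with `EMetric.infEdist`). -/
def Attracts {Ω X : Type*} [MetricSpace X]
    (S : ℝ → ℝ → Ω → X → X) (t : ℝ) (ω : Ω) (K : Set X) : Prop :=
  ∀ B : Set X, B.Nonempty → Bornology.IsBounded B →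
    Tendsto (fun s : ℝ => ⨆ x ∈ B, EMetric.infEdist (S t s ω x) K) atBot (𝓝 0)

/-- The stochastic flow `S` is asymptotically compact with compact attracting sets `K t ω`
on a full-measure set `Ω₀`. -/
def IsAsymptoticallyCompact {Ω X : Type*} [MeasurableSpace Ω] [MetricSpace X]
    (ℙ : Measure Ω) (S : ℝ → ℝ → Ω → X → X) : Prop :=
  ∃ Ω₀ : Set Ω, MeasurableSet Ω₀ ∧ ℙ Ω₀ = 1 ∧
    ∀ ω ∈ Ω₀, ∀ t : ℝ, ∃ K : Set X, IsCompact K ∧ Attracts S t ω K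

/-- An evolution system of measures for the stochastic flow `S`: a family of probability
measures `μ t` on `Ω × X` with marginal `ℙ` on `Ω`, such that the image of `μ s` under
`(ω, x) ↦ (ω, S t s ω x)` is `μ t` whenever `s ≤ t`. -/
def IsEvolutionSystem {Ω X : Type*} [MeasurableSpace Ω] [MeasurableSpace X]
    (ℙ : Measure Ω) (S : ℝ → ℝ → Ω → X → X) (μ : ℝ → Measure (Ω × X)) : Prop :=
  (∀ t : ℝ, IsProbabilityMeasure (μ t)) ∧
  (∀ t : ℝ, (μ t).map Prod.fst = ℙ) ∧
  (∀ s t : ℝ, s ≤ t → (μ s).map (fun p : Ω × X => (p.1, S t s p.1 p.2)) = μ t)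

/-- The `ℙ`-completion of a sub-σ-algebra `m`: generated by all sets differing from an
`m`-measurable set by a `ℙ`-null set. -/
def completionOf {Ω : Type*} [MeasurableSpace Ω] (ℙ : Measure Ω)
    (m : MeasurableSpace Ω) : MeasurableSpace Ω :=
  MeasurableSpace.generateFrom {A | ∃ B : Set Ω, MeasurableSet[m] B ∧ ℙ (symmDiff A B) = 0}

/-- The σ-algebra generated by the random variables `ω ↦ S u t ω x` with `s ≤ t ≤ u`. -/
def sigmaGe {Ω X : Type*} [MeasurableSpace X] (S : ℝ → ℝ → Ω → X → X) (s : ℝ) :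
    MeasurableSpace Ω :=
  MeasurableSpace.generateFrom
    {A | ∃ (t u : ℝ) (x : X) (B : Set X), s ≤ t ∧ t ≤ u ∧ MeasurableSet B ∧
      A = {ω | S u t ω x ∈ B}}

/-- The σ-algebra generated by the random variables `ω ↦ S u t ω x` with `t ≤ u ≤ s`. -/
def sigmaLe {Ω X : Type*} [MeasurableSpace X] (S : ℝ → ℝ → Ω → X → X) (s : ℝ) :
    MeasurableSpace Ω :=
  MeasurableSpace.generateFrom
    {A | ∃ (t u : ℝ) (x : X) (B : Set X), t ≤ u ∧ u ≤ s ∧ MeasurableSet B ∧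
      A = {ω | S u t ω x ∈ B}}

/-- `𝓕_{≥ s}`: the `ℙ`-completion of the σ-algebra generated by the flow after time `s`. -/
def Fge {Ω X : Type*} [MeasurableSpace Ω] [MeasurableSpace X]
    (ℙ : Measure Ω) (S : ℝ → ℝ → Ω → X → X) (s : ℝ) : MeasurableSpace Ω :=
  completionOf ℙ (sigmaGe S s)

/-- `𝓕_{≤ s}`: the `ℙ`-completion of the σ-algebra generated by the flow before time `s`. -/
def Fle {Ω X : Type*} [MeasurableSpace Ω] [MeasurableSpace X]
    (ℙ : Measure Ω) (S : ℝ → ℝ → Ω → X → X) (s : ℝ) : MeasurableSpace Ω :=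
  completionOf ℙ (sigmaLe S s)

/-- A white noise stochastic flow: a stochastic flow such that for every `s ∈ ℝ`, the
σ-algebras `𝓕_{≥ s}` and `𝓕_{≤ s}` are independent. -/
def IsWhiteNoiseFlow {Ω X : Type*} [MeasurableSpace Ω] [MetricSpace X]
    [MeasurableSpace X] [BorelSpace X]
    (ℙ : Measure Ω) (S : ℝ → ℝ → Ω → X → X) : Prop :=
  IsStochasticFlow ℙ S ∧
  ∀ s : ℝ, ProbabilityTheory.Indep (Fge ℙ S s) (Fle ℙ S s) ℙ

/-- An evolution system of measures for the Markov transition semigroup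
`P_{st} f x = 𝔼[f (S t s · x)]` associated to the flow `S`: a family of Borel
probability measures `ρ s` on `X` with `P_{st} ρ_s = ρ_t` for all `s ≤ t`. -/
def IsMarkovEvolutionSystem {Ω X : Type*} [MeasurableSpace Ω] [MeasurableSpace X]
    (ℙ : Measure Ω) (S : ℝ → ℝ → Ω → X → X) (ρ : ℝ → Measure X) : Prop :=
  (∀ t : ℝ, IsProbabilityMeasure (ρ t)) ∧
  (∀ s t : ℝ, s ≤ t → ∀ B : Set X, MeasurableSet B →
    (∫⁻ x, ℙ {ω | S t s ω x ∈ B} ∂(ρ s)) = ρ t B)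

section AuxLemmas

lemma completionOf_le {Ω : Type*} {m0 : MeasurableSpace Ω} (ℙ : Measure Ω)
    (m : MeasurableSpace Ω) : m ≤ @completionOf Ω m0 ℙ m := by
  intro A hA
  exact MeasurableSpace.measurableSet_generateFrom (⟨A, hA, by simp⟩ :
    A ∈ {A | ∃ B : Set Ω, MeasurableSet[m] B ∧ ℙ (symmDiff A B) = 0})

lemma exists_of_completion {Ω : Type*} {m0 : MeasurableSpace Ω} (ℙ : Measure Ω)
    (m : MeasurableSpace Ω) {A : Set Ω} (hA : MeasurableSet[@completionOf Ω m0 ℙ m] A) :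
    ∃ B : Set Ω, MeasurableSet[m] B ∧ ℙ (symmDiff A B) = 0 := by
  induction A, hA using MeasurableSpace.generateFrom_induction with
  | hC t ht _ => exact ht
  | empty => exact ⟨∅, @MeasurableSet.empty Ω m, by simp⟩
  | compl t ht h =>
    obtain ⟨B, hB, hB0⟩ := h
    exact ⟨Bᶜ, MeasurableSet.compl hB, by rwa [compl_symmDiff_compl]⟩
  | iUnion s hs h =>
    choose B hB hB0 using h
    refine ⟨⋃ n, B n, MeasurableSet.iUnion hB, ?_⟩
    refine measure_mono_null ?_ (measure_iUnion_null hB0)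
    intro x hx
    simp only [Set.mem_symmDiff, Set.mem_iUnion] at hx ⊢
    rcases hx with ⟨⟨n, hn⟩, h2⟩ | ⟨⟨n, hn⟩, h2⟩
    · exact ⟨n, Or.inl ⟨hn, fun h => h2 ⟨n, h⟩⟩⟩
    · exact ⟨n, Or.inr ⟨hn, fun h => h2 ⟨n, h⟩⟩⟩

lemma measurable_completionOf_of_ae {Ω β : Type*} {m0 : MeasurableSpace Ω} [MeasurableSpace β]
    (ℙ : Measure Ω) (m : MeasurableSpace Ω) {g h : Ω → β}
    (hg : Measurable[@completionOf Ω m0 ℙ m] g) {N : Set Ω} (hN : ℙ N = 0)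
    (heq : ∀ ω ∉ N, h ω = g ω) : Measurable[@completionOf Ω m0 ℙ m] h := by
  intro B hB
  obtain ⟨B', hB', hB'0⟩ := exists_of_completion ℙ m (hg hB)
  refine MeasurableSpace.measurableSet_generateFrom (⟨B', hB', ?_⟩ :
    h ⁻¹' B ∈ {A | ∃ B : Set Ω, MeasurableSet[m] B ∧ ℙ (symmDiff A B) = 0})
  have h1 : symmDiff (h ⁻¹' B) (g ⁻¹' B) ⊆ N := by
    intro x hx
    by_contra hxN
    rcases hx with ⟨hx1, hx2⟩ | ⟨hx1, hx2⟩ <;>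
      simp only [Set.mem_preimage, heq x hxN] at hx1 hx2 <;> exact hx2 hx1
  refine measure_mono_null (symmDiff_triangle (h ⁻¹' B) (g ⁻¹' B) B') ?_
  exact measure_union_null (measure_mono_null h1 hN) hB'0

lemma measurable_completionOf_of_meas_ae {Ω β : Type*} {m0 : MeasurableSpace Ω} [MeasurableSpace β]
    (ℙ : Measure Ω) (m : MeasurableSpace Ω) {g h : Ω → β}
    (hg : Measurable[m] g) {N : Set Ω} (hN : ℙ N = 0)
    (heq : ∀ ω ∉ N, h ω = g ω) : Measurable[@completionOf Ω m0 ℙ m] h :=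
  measurable_completionOf_of_ae ℙ m (hg.mono (completionOf_le ℙ m) le_rfl) hN heq

lemma completionOf_le_ambient {Ω : Type*} {m0 : MeasurableSpace Ω} (ℙ : Measure Ω)
    [ℙ.IsComplete] (m : MeasurableSpace Ω) (hm : m ≤ m0) : @completionOf Ω m0 ℙ m ≤ m0 := by
  refine MeasurableSpace.generateFrom_le ?_
  rintro A ⟨B, hB, h0⟩
  have h1 : MeasurableSet[m0] (symmDiff B A) := by
    refine measurableSet_of_null (μ := ℙ) ?_
    rwa [symmDiff_comm]
  have h2 : A = symmDiff B (symmDiff B A) := (symmDiff_symmDiff_cancel_left B A).symm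
  rw [h2]
  exact (hm B hB).symmDiff h1

lemma integrable_of_bdd {Ω : Type*} [MeasurableSpace Ω] {ℙ : Measure Ω} [IsFiniteMeasure ℙ]
    {g : Ω → ℝ} (hg : AEStronglyMeasurable g ℙ) {C : ℝ} (hb : ∀ ω, |g ω| ≤ C) :
    Integrable g ℙ :=
  ⟨hg, HasFiniteIntegral.of_bounded (C := C) (Filter.Eventually.of_forall fun ω => by
    simpa [Real.norm_eq_abs] using hb ω)⟩

lemma indep_fun_id {Ω X : Type*} {m0 : MeasurableSpace Ω} {mX : MeasurableSpace X}
    (ℙ : Measure Ω) (m₁ m₂ : MeasurableSpace Ω)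
    (hind : @ProbabilityTheory.Indep Ω m₁ m₂ m0 ℙ)
    (Z : Ω → X) (hZ : Measurable[m₂] Z) :
    @ProbabilityTheory.IndepFun Ω Ω X m0 m₁ mX id Z ℙ := by
  show @ProbabilityTheory.Indep Ω (MeasurableSpace.comap id m₁) (MeasurableSpace.comap Z mX) m0 ℙ
  refine ProbabilityTheory.indep_of_indep_of_le_left
    (ProbabilityTheory.indep_of_indep_of_le_right hind
      (MeasurableSpace.comap_le_iff_le_map.mpr fun s hs => hZ hs)) ?_
  intro s hs
  obtain ⟨s', hs', rfl⟩ := hs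
  simpa using hs'

lemma indep_comp {Ω X : Type*} {m0 : MeasurableSpace Ω} {mX : MeasurableSpace X}
    (ℙ : Measure Ω) [IsProbabilityMeasure ℙ]
    (m₁ : MeasurableSpace Ω) (hm₁ : m₁ ≤ m0)
    (φ : Ω × X → ℝ) (hφ : Measurable[@Prod.instMeasurableSpace Ω X m₁ mX] φ)
    (C : ℝ) (hφb : ∀ p, |φ p| ≤ C)
    (Z : Ω → X) (hZ0 : Measurable[m0] Z)
    (hIF : @ProbabilityTheory.IndepFun Ω Ω X m0 m₁ mX id Z ℙ) :
    ∫ ω, φ (ω, Z ω) ∂ℙ = ∫ ω, (∫ ω', φ (ω, Z ω') ∂ℙ) ∂ℙ := by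
  have hid : @Measurable Ω Ω m0 m₁ id := measurable_id'' hm₁
  set mP : MeasurableSpace (Ω × X) := @Prod.instMeasurableSpace Ω X m₁ mX with hmP
  set μZ : @Measure X mX := @Measure.map Ω X m0 mX Z ℙ with hμZ
  set μid : @Measure Ω m₁ := @Measure.map Ω Ω m0 m₁ id ℙ with hμid
  have hidae : @AEMeasurable Ω Ω m₁ m0 id ℙ := hid.aemeasurable
  haveI : IsProbabilityMeasure μZ := Measure.isProbabilityMeasure_map hZ0.aemeasurable
  haveI : IsProbabilityMeasure μid := Measure.isProbabilityMeasure_map hidae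
  set μT : @Measure (Ω × X) mP := @Measure.map Ω (Ω × X) m0 mP (fun ω => (ω, Z ω)) ℙ with hμT
  have hT : @Measurable Ω (Ω × X) m0 mP (fun ω => (ω, Z ω)) := Measurable.prodMk hid hZ0
  have hTae : @AEMeasurable Ω (Ω × X) mP m0 (fun ω => (ω, Z ω)) ℙ := hT.aemeasurable
  have hmap : μT = @Measure.prod Ω X m₁ mX μid μZ :=
    (ProbabilityTheory.indepFun_iff_map_prod_eq_prod_map_map (mβ := m₁) (mβ' := mX)
      (f := (id : Ω → Ω)) (g := Z) (μ := ℙ) hidae hZ0.aemeasurable).mp hIF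
  haveI : IsProbabilityMeasure μT := Measure.isProbabilityMeasure_map hTae
  have hφsm : StronglyMeasurable[mP] φ := hφ.stronglyMeasurable
  have step1 : ∫ ω, φ (ω, Z ω) ∂ℙ = ∫ p, φ p ∂μT :=
    (integral_map hTae hφsm.aestronglyMeasurable).symm
  have hint : Integrable φ (@Measure.prod Ω X m₁ mX μid μZ) := by
    haveI : IsProbabilityMeasure (@Measure.prod Ω X m₁ mX μid μZ) := by
      rw [← hmap]; infer_instance
    exact integrable_of_bdd hφsm.aestronglyMeasurable hφb
  have step2 : ∫ p, φ p ∂μT = ∫ ω₁, (∫ y, φ (ω₁, y) ∂μZ) ∂μid := by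
    rw [hmap]
    exact integral_prod φ hint
  have hg : StronglyMeasurable[m₁] (fun ω₁ => ∫ y, φ (ω₁, y) ∂μZ) :=
    StronglyMeasurable.integral_prod_right' (ν := μZ) hφsm
  have step3 : ∫ ω₁, (∫ y, φ (ω₁, y) ∂μZ) ∂μid = ∫ ω, (∫ y, φ (ω, y) ∂μZ) ∂ℙ :=
    integral_map hidae hg.aestronglyMeasurable
  have step4 : ∀ ω : Ω, ∫ y, φ (ω, y) ∂μZ = ∫ ω', φ (ω, Z ω') ∂ℙ := by
    intro ω
    refine integral_map hZ0.aemeasurable ?_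
    have hm : Measurable[mX] (fun y => φ (ω, y)) :=
      hφ.comp (@measurable_prodMk_left Ω X m₁ mX ω)
    exact hm.stronglyMeasurable.aestronglyMeasurable
  rw [step1, step2, step3]
  exact integral_congr_ae (Filter.Eventually.of_forall fun ω => step4 ω)

lemma joint_meas {Ω X : Type*} [MetricSpace X] [TopologicalSpace.SeparableSpace X]
    [MeasurableSpace X] [BorelSpace X] (m : MeasurableSpace Ω) (G : Ω → X → X)
    (hc : ∀ ω, Continuous (G ω)) (hm : ∀ x, Measurable[m] (fun ω => G ω x)) :
    Measurable[@Prod.instMeasurableSpace Ω X m _] (fun p : Ω × X => G p.1 p.2) := by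
  haveI : SecondCountableTopology X := UniformSpace.secondCountable_of_separable X
  have h1 : Measurable[@Prod.instMeasurableSpace X Ω _ m]
      (Function.uncurry (fun x ω => G ω x)) :=
    measurable_uncurry_of_continuous_of_measurable (u := fun (x : X) (ω : Ω) => G ω x)
      (fun ω => hc ω) hm
  exact h1.comp (@measurable_swap Ω X m _)

end AuxLemmas

/-- for a white noise stochastic flow `S` on a complete probability space,
with an evolution system of measures `ρ` for the Markov semigroup, a fixed time `t` and a
bounded measurable `f : X → ℝ`, the process `M_s(ω) := ∫ f(S(t,t-s;ω)x) ρ_{t-s}(dx)`,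
`s ≥ 0`, is a bounded martingale with respect to the filtration `𝓖_s := 𝓕_{≥ t-s}`. -/
theorem stmt8 {Ω X : Type*} [MeasurableSpace Ω] [MetricSpace X] [CompleteSpace X]
    [TopologicalSpace.SeparableSpace X] [MeasurableSpace X] [BorelSpace X]
    (ℙ : Measure Ω) [IsProbabilityMeasure ℙ] [ℙ.IsComplete]
    (S : ℝ → ℝ → Ω → X → X) (hS : IsWhiteNoiseFlow ℙ S)
    (ρ : ℝ → Measure X) (hρ : IsMarkovEvolutionSystem ℙ S ρ)
    (t : ℝ) (f : X → ℝ) (hfm : Measurable f) (C : ℝ) (hfb : ∀ x : X, |f x| ≤ C)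
    (M : ℝ → Ω → ℝ) (hM : ∀ s : ℝ, ∀ ω : Ω, M s ω = ∫ x, f (S t (t - s) ω x) ∂(ρ (t - s))) :
    (∀ s : ℝ, 0 ≤ s → ∀ ω : Ω, |M s ω| ≤ C) ∧
    (∀ s : ℝ, 0 ≤ s → Measurable[Fge ℙ S (t - s)] (M s)) ∧
    (∀ s u : ℝ, 0 ≤ s → s ≤ u → ℙ[M u | Fge ℙ S (t - s)] =ᵐ[ℙ] M s) := by
  classical
  obtain ⟨⟨hae, hjm⟩, hindep⟩ := hS
  haveI hρP : ∀ b : ℝ, IsProbabilityMeasure (ρ b) := hρ.1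
  haveI : SecondCountableTopology X := UniformSpace.secondCountable_of_separable X
  have hXne : Nonempty X := by
    by_contra h
    have h1 : (ρ t) Set.univ = 1 := measure_univ
    rw [Set.univ_eq_empty_iff.mpr (not_nonempty_iff.mp h)] at h1
    simp at h1
  have hC0 : 0 ≤ C := le_trans (abs_nonneg _) (hfb (Classical.arbitrary X))
  set P : Ω → Prop := fun ω =>
    (∀ s r t : ℝ, s ≤ r → r ≤ t → ∀ x : X, S t r ω (S r s ω x) = S t s ω x) ∧
    (∀ s t : ℝ, s ≤ t → Continuous fun x : X => S t s ω x) ∧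
    (∀ t : ℝ, ∀ x : X, S t t ω x = x) with hPdef
  set N : Set Ω := toMeasurable ℙ {ω | ¬ P ω} with hNdef
  have hNm : MeasurableSet N := measurableSet_toMeasurable ℙ _
  have hN : ℙ N = 0 := by
    rw [hNdef, measure_toMeasurable]
    exact ae_iff.mp hae
  have hNae : ∀ᵐ ω ∂ℙ, ω ∉ N := by
    rw [ae_iff]
    simpa using hN
  have hgood : ∀ ω, ω ∉ N → P ω := by
    intro ω hω
    by_contra h
    exact hω (subset_toMeasurable ℙ _ h)
  have hSx : ∀ u r : ℝ, r ≤ u → ∀ x : X, Measurable (fun ω => S u r ω x) := by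
    intro u r hru x
    exact (hjm u x).comp
      ((measurable_const (a := (⟨r, hru⟩ : {s : ℝ // s ≤ u}))).prodMk measurable_id)
  have hSge : ∀ b r u : ℝ, b ≤ r → r ≤ u → ∀ x : X,
      Measurable[sigmaGe S b] (fun ω => S u r ω x) := by
    intro b r u hbr hru x B hB
    exact MeasurableSpace.measurableSet_generateFrom ⟨r, u, x, B, hbr, hru, hB, rfl⟩
  have hSle : ∀ b r u : ℝ, r ≤ u → u ≤ b → ∀ x : X,
      Measurable[sigmaLe S b] (fun ω => S u r ω x) := by
    intro b r u hru hub x B hB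
    exact MeasurableSpace.measurableSet_generateFrom ⟨r, u, x, B, hru, hub, hB, rfl⟩
  have hsigGe_le : ∀ b : ℝ, sigmaGe S b ≤ ‹MeasurableSpace Ω› := by
    intro b
    refine MeasurableSpace.generateFrom_le ?_
    rintro A ⟨r, u, x, B, h1, h2, hB, rfl⟩
    exact hSx u r h2 x hB
  have hFge_le : ∀ b : ℝ, Fge ℙ S b ≤ ‹MeasurableSpace Ω› := fun b =>
    completionOf_le_ambient ℙ (sigmaGe S b) (hsigGe_le b)
  -- modified flow maps
  have hGmk : ∀ c b : ℝ, b ≤ c →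
      (∀ ω, Continuous (fun y : X => if ω ∈ N then y else S c b ω y)) ∧
      (∀ x : X, Measurable (fun ω => if ω ∈ N then x else S c b ω x)) := by
    intro c b hbc
    constructor
    · intro ω
      by_cases hω : ω ∈ N
      · simpa [hω] using continuous_id'
      · simpa [hω] using (hgood ω hω).2.1 b c hbc
    · intro x
      exact Measurable.ite hNm measurable_const (hSx c b hbc x)
  have hGge : ∀ c b : ℝ, b ≤ c → ∀ x : X,
      Measurable[Fge ℙ S b] (fun ω => if ω ∈ N then x else S c b ω x) := by
    intro c b hbc x
    exact measurable_completionOf_of_meas_ae ℙ (sigmaGe S b) (hSge b b c le_rfl hbc x) hN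
      (fun ω hω => if_neg hω)
  have hHle : ∀ b a : ℝ, a ≤ b → ∀ x : X,
      Measurable[Fle ℙ S b] (fun ω => if ω ∈ N then x else S b a ω x) := by
    intro b a hab x
    exact measurable_completionOf_of_meas_ae ℙ (sigmaLe S b) (hSle b a b hab le_rfl x) hN
      (fun ω hω => if_neg hω)
  -- measurability of the parametrized integral
  have meas2 : ∀ b : ℝ, b ≤ t → ∀ ν : Measure X, SFinite ν →
      Measurable[Fge ℙ S b] (fun ω => ∫ x, f (S t b ω x) ∂ν) := by
    intro b hbt ν hνsf
    set G : Ω → X → X := fun ω y => if ω ∈ N then y else S t b ω y with hGdef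
    have hGc := (hGmk t b hbt).1
    have hGx : ∀ x, Measurable[Fge ℙ S b] (fun ω => G ω x) := hGge t b hbt
    have hGj := joint_meas (Fge ℙ S b) G hGc hGx
    haveI := hνsf
    have hsm : StronglyMeasurable[Fge ℙ S b] (fun ω => ∫ x, f (G ω x) ∂ν) :=
      @MeasureTheory.StronglyMeasurable.integral_prod_right' Ω X ℝ (Fge ℙ S b) _ ν _ _ _ _
        ((hfm.comp hGj).stronglyMeasurable)
    show Measurable[completionOf ℙ (sigmaGe S b)] _
    refine measurable_completionOf_of_ae ℙ (sigmaGe S b) hsm.measurable hN ?_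
    intro ω hω
    have : (fun x => f (S t b ω x)) = fun x => f (G ω x) := by
      funext x
      rw [hGdef]
      simp [hω]
    rw [this]
  have bdd : ∀ s : ℝ, ∀ ω : Ω, |M s ω| ≤ C := by
    intro s ω
    rw [hM s ω, ← Real.norm_eq_abs]
    have h := norm_integral_le_of_norm_le_const (μ := ρ (t - s))
      (f := fun x => f (S t (t - s) ω x)) (C := C)
      (Filter.Eventually.of_forall fun x => by simpa [Real.norm_eq_abs] using hfb _)
    simpa [measure_univ] using h
  have meas : ∀ s : ℝ, 0 ≤ s → Measurable[Fge ℙ S (t - s)] (M s) := by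
    intro s hs
    have hbt : t - s ≤ t := by linarith
    have h1 := meas2 (t - s) hbt (ρ (t - s)) inferInstance
    have h2 : M s = fun ω => ∫ x, f (S t (t - s) ω x) ∂(ρ (t - s)) := funext fun ω => hM s ω
    rwa [h2]
  have hMint : ∀ s : ℝ, 0 ≤ s → Integrable (M s) ℙ := fun s hs =>
    integrable_of_bdd (((meas s hs).mono (hFge_le _) le_rfl).aestronglyMeasurable)
      (fun ω => bdd s ω)
  refine ⟨fun s _ ω => bdd s ω, meas, ?_⟩
  intro s u hs hsu
  have hus : 0 ≤ u := le_trans hs hsu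
  set a : ℝ := t - u with hadef
  set b : ℝ := t - s with hbdef
  have hab : a ≤ b := by rw [hadef, hbdef]; linarith
  have hbt : b ≤ t := by rw [hbdef]; linarith
  have hm : Fge ℙ S b ≤ ‹MeasurableSpace Ω› := hFge_le b
  haveI : IsFiniteMeasure (ℙ.trim hm) := isFiniteMeasure_trim hm
  have hMsm : Measurable[Fge ℙ S b] (M s) := meas s hs
  refine (ae_eq_condExp_of_forall_setIntegral_eq hm (hMint u hus)
    (fun A _ _ => (hMint s hs).integrableOn) ?_
    (StronglyMeasurable.aestronglyMeasurable hMsm.stronglyMeasurable)).symm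
  intro A hA _
  obtain ⟨A', hA'g, hAA'⟩ := exists_of_completion ℙ (sigmaGe S b) hA
  have hAe : A =ᵐ[ℙ] A' := measure_symmDiff_eq_zero_iff.mp hAA'
  have hA'm : MeasurableSet A' := hsigGe_le b A' hA'g
  rw [setIntegral_congr_set hAe, setIntegral_congr_set hAe]
  set G : Ω → X → X := fun ω y => if ω ∈ N then y else S t b ω y with hGdef
  set H : Ω → X → X := fun ω x => if ω ∈ N then x else S b a ω x with hHdef
  have hGc : ∀ ω, Continuous (G ω) := (hGmk t b hbt).1
  have hGx0 : ∀ x, Measurable (fun ω => G ω x) := (hGmk t b hbt).2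
  have hHc : ∀ ω, Continuous (H ω) := (hGmk b a hab).1
  have hHx0 : ∀ x, Measurable (fun ω => H ω x) := (hGmk b a hab).2
  have hGxg : ∀ x, Measurable[Fge ℙ S b] (fun ω => G ω x) := hGge t b hbt
  have hHxl : ∀ x, Measurable[Fle ℙ S b] (fun ω => H ω x) := hHle b a hab
  have hGj : Measurable[@Prod.instMeasurableSpace Ω X (Fge ℙ S b) _]
      (fun p : Ω × X => G p.1 p.2) := joint_meas _ G hGc hGxg
  have hGj0 : Measurable (fun p : Ω × X => G p.1 p.2) := joint_meas _ G hGc hGx0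
  have hHj0 : Measurable (fun p : Ω × X => H p.1 p.2) := joint_meas _ H hHc hHx0
  set χ : Ω → ℝ := A'.indicator (fun _ => (1 : ℝ)) with hχdef
  have hχm : Measurable χ := measurable_const.indicator hA'm
  have hχmg : Measurable[Fge ℙ S b] χ :=
    (@measurable_const ℝ Ω _ (Fge ℙ S b) 1).indicator (completionOf_le ℙ (sigmaGe S b) A' hA'g)
  set φ : Ω × X → ℝ := fun p => χ p.1 * f (G p.1 p.2) with hφdef
  have hφ : ∀ p : Ω × X, |φ p| ≤ C := by
    intro p
    rw [hφdef]
    simp only [abs_mul]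
    by_cases h : p.1 ∈ A'
    · simp only [hχdef, Set.indicator_of_mem h, abs_one, one_mul]
      exact hfb _
    · simp only [hχdef, Set.indicator_of_notMem h, abs_zero, zero_mul]
      exact hC0
  have hφmg : Measurable[@Prod.instMeasurableSpace Ω X (Fge ℙ S b) _] φ := by
    have h1 : Measurable[@Prod.instMeasurableSpace Ω X (Fge ℙ S b) _]
        (fun p : Ω × X => χ p.1) := hχmg.comp (@measurable_fst Ω X (Fge ℙ S b) _)
    exact h1.mul (hfm.comp hGj)
  have hφm0 : Measurable φ := (hχm.comp measurable_fst).mul (hfm.comp hGj0)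
  -- congruence lemmas for the two endpoints
  have hMu_eq : ∀ᵐ ω ∂ℙ, ω ∈ A' → M u ω = ∫ x, f (G ω (H ω x)) ∂(ρ a) := by
    filter_upwards [hNae] with ω hω _
    rw [hM u ω, ← hadef]
    refine integral_congr_ae (Filter.Eventually.of_forall fun x => ?_)
    rw [hGdef, hHdef]
    simp only [if_neg hω]
    rw [(hgood ω hω).1 a b t hab hbt x]
  have hMs_eq : ∀ᵐ ω ∂ℙ, ω ∈ A' → M s ω = ∫ y, f (G ω y) ∂(ρ b) := by
    filter_upwards [hNae] with ω hω _
    rw [hM s ω, ← hbdef]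
    refine integral_congr_ae (Filter.Eventually.of_forall fun y => ?_)
    rw [hGdef]
    simp only [if_neg hω]
  have eind : ∀ F : Ω → ℝ, ∫ ω in A', F ω ∂ℙ = ∫ ω, χ ω * F ω ∂ℙ := by
    intro F
    rw [← integral_indicator hA'm]
    refine integral_congr_ae (Filter.Eventually.of_forall fun ω => ?_)
    by_cases h : ω ∈ A' <;> simp [hχdef, Set.indicator_apply, h]
  -- Fubini 1
  have hψm : Measurable (fun p : Ω × X => φ (p.1, H p.1 p.2)) :=
    hφm0.comp (measurable_fst.prodMk hHj0)
  have swap1 : ∫ ω, (∫ x, φ (ω, H ω x) ∂(ρ a)) ∂ℙ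
      = ∫ x, (∫ ω, φ (ω, H ω x) ∂ℙ) ∂(ρ a) := by
    refine integral_integral_swap ?_
    exact integrable_of_bdd hψm.aestronglyMeasurable (fun p => hφ (p.1, H p.1 p.2))
  -- independence step
  have e5 : ∀ x : X, ∫ ω, φ (ω, H ω x) ∂ℙ = ∫ ω, (∫ ω', φ (ω, H ω' x) ∂ℙ) ∂ℙ := by
    intro x
    exact indep_comp ℙ (Fge ℙ S b) hm φ hφmg C hφ (fun ω => H ω x) (hHx0 x)
      (indep_fun_id ℙ (Fge ℙ S b) (Fle ℙ S b) (hindep b) (fun ω => H ω x) (hHxl x))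
  -- Fubini 2
  have hΞm : Measurable (fun q : (Ω × X) × Ω => φ (q.1.1, H q.2 q.1.2)) :=
    hφm0.comp ((measurable_fst.comp measurable_fst).prodMk
      (hHj0.comp (measurable_snd.prodMk (measurable_snd.comp measurable_fst))))
  have hΘm : Measurable (fun p : Ω × X => ∫ ω', φ (p.1, H ω' p.2) ∂ℙ) := by
    have h := (hΞm.stronglyMeasurable).integral_prod_right' (ν := ℙ)
    exact h.measurable
  have hΘb : ∀ p : Ω × X, |∫ ω', φ (p.1, H ω' p.2) ∂ℙ| ≤ C := by
    intro p
    rw [← Real.norm_eq_abs]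
    have h := norm_integral_le_of_norm_le_const (μ := ℙ)
      (f := fun ω' => φ (p.1, H ω' p.2)) (C := C)
      (Filter.Eventually.of_forall fun ω' => by
        simpa [Real.norm_eq_abs] using hφ (p.1, H ω' p.2))
    simpa [measure_univ] using h
  have swap2 : ∫ x, (∫ ω, (∫ ω', φ (ω, H ω' x) ∂ℙ) ∂ℙ) ∂(ρ a)
      = ∫ ω, (∫ x, (∫ ω', φ (ω, H ω' x) ∂ℙ) ∂(ρ a)) ∂ℙ := by
    refine integral_integral_swap ?_
    refine integrable_of_bdd ?_ (fun p : X × Ω => hΘb (p.2, p.1))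
    exact (hΘm.comp (measurable_snd.prodMk measurable_fst)).aestronglyMeasurable
  -- evolution of measures
  have hq : Measurable (fun p : X × Ω => H p.2 p.1) :=
    hHj0.comp (measurable_snd.prodMk measurable_fst)
  have hκ : (((ρ a).prod ℙ).map (fun p : X × Ω => H p.2 p.1)) = ρ b := by
    refine Measure.ext fun B hB => ?_
    rw [Measure.map_apply hq hB, Measure.prod_apply (hq hB)]
    have hsec : ∀ x : X,
        ℙ (Prod.mk x ⁻¹' ((fun p : X × Ω => H p.2 p.1) ⁻¹' B)) = ℙ {ω | S b a ω x ∈ B} := by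
      intro x
      refine measure_congr ?_
      filter_upwards [hNae] with ω hω
      have hHx : H ω x = S b a ω x := if_neg hω
      exact congrArg (fun y => y ∈ B) hHx
    calc ∫⁻ x, ℙ (Prod.mk x ⁻¹' ((fun p : X × Ω => H p.2 p.1) ⁻¹' B)) ∂(ρ a)
        = ∫⁻ x, ℙ {ω | S b a ω x ∈ B} ∂(ρ a) := lintegral_congr hsec
      _ = ρ b B := hρ.2 a b hab B hB
  have keyω : ∀ ω, ω ∉ N →
      ∫ x, (∫ ω', f (G ω (H ω' x)) ∂ℙ) ∂(ρ a) = ∫ y, f (G ω y) ∂(ρ b) := by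
    intro ω hω
    have hint2 : Integrable (fun p : X × Ω => f (G ω (H p.2 p.1))) ((ρ a).prod ℙ) :=
      integrable_of_bdd ((hfm.comp ((hGc ω).measurable.comp hq)).aestronglyMeasurable)
        (fun p => hfb _)
    have h1 : ∫ x, (∫ ω', f (G ω (H ω' x)) ∂ℙ) ∂(ρ a)
        = ∫ p, f (G ω (H p.2 p.1)) ∂((ρ a).prod ℙ) := (integral_prod _ hint2).symm
    rw [h1, ← hκ]
    exact (integral_map hq.aemeasurable
      ((hfm.comp (hGc ω).measurable).aestronglyMeasurable)).symm
  -- main chain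
  calc ∫ ω in A', M s ω ∂ℙ
      = ∫ ω in A', (∫ y, f (G ω y) ∂(ρ b)) ∂ℙ := setIntegral_congr_ae hA'm hMs_eq
    _ = ∫ ω, χ ω * (∫ y, f (G ω y) ∂(ρ b)) ∂ℙ := eind _
    _ = ∫ ω, χ ω * (∫ x, (∫ ω', f (G ω (H ω' x)) ∂ℙ) ∂(ρ a)) ∂ℙ := by
        refine integral_congr_ae ?_
        filter_upwards [hNae] with ω hω
        rw [keyω ω hω]
    _ = ∫ ω, (∫ x, (∫ ω', φ (ω, H ω' x) ∂ℙ) ∂(ρ a)) ∂ℙ := by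
        refine integral_congr_ae (Filter.Eventually.of_forall fun ω => ?_)
        dsimp only
        rw [← integral_const_mul]
        refine integral_congr_ae (Filter.Eventually.of_forall fun x => ?_)
        dsimp only
        rw [← integral_const_mul]
    _ = ∫ x, (∫ ω, (∫ ω', φ (ω, H ω' x) ∂ℙ) ∂ℙ) ∂(ρ a) := swap2.symm
    _ = ∫ x, (∫ ω, φ (ω, H ω x) ∂ℙ) ∂(ρ a) := by
        refine integral_congr_ae (Filter.Eventually.of_forall fun x => ?_)
        exact (e5 x).symm
    _ = ∫ ω, (∫ x, φ (ω, H ω x) ∂(ρ a)) ∂ℙ := swap1.symm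
    _ = ∫ ω, χ ω * (∫ x, f (G ω (H ω x)) ∂(ρ a)) ∂ℙ := by
        refine integral_congr_ae (Filter.Eventually.of_forall fun ω => ?_)
        dsimp only
        rw [← integral_const_mul]
    _ = ∫ ω in A', (∫ x, f (G ω (H ω x)) ∂(ρ a)) ∂ℙ := (eind _).symm
    _ = ∫ ω in A', M u ω ∂ℙ := (setIntegral_congr_ae hA'm hMu_eq).symm
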